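/- If G is a nontrivial connected graph, then 1 ≤ pd(G) ≤ rd(G) ≤ χ'(G) ≤ Δ(G)+1, where pd is the proper disconnection number, rd the rainbow disconnection number, χ' the chromatic index, and Δ the maximum degree. -/

import Mathlib

open SimpleGraph

variable {V : Type*}

/-- Two edges are adjacent: distinct and sharing an endpoint. -/
def EdgesAdj (e₁ e₂ : Sym2 V) : Prop := e₁ ≠ e₂ ∧ ∃ v, v ∈ e₁ ∧ v ∈ e₂

/-- `F` is an edge-cut of `G` separating `x` and `y`. -/
def IsSepCut (G : SimpleGraph V) (F : Set (Sym2 V)) (x y : V) : Prop :=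
  F ⊆ G.edgeSet ∧ ¬ (G.deleteEdges F).Reachable x y

/-- `F` is a proper edge-cut (w.r.t. edge-coloring `c`) separating `x` and `y`. -/
def IsProperSepCut (G : SimpleGraph V) (c : Sym2 V → ℕ) (F : Set (Sym2 V)) (x y : V) : Prop :=
  IsSepCut G F x y ∧ ∀ e₁ ∈ F, ∀ e₂ ∈ F, EdgesAdj e₁ e₂ → c e₁ ≠ c e₂

/-- `F` is a rainbow edge-cut separating `x` and `y`. -/
def IsRainbowSepCut (G : SimpleGraph V) (c : Sym2 V → ℕ) (F : Set (Sym2 V)) (x y : V) : Prop :=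
  IsSepCut G F x y ∧ Set.InjOn c F

/-- `F` is a matching cut separating `x` and `y`. -/
def IsMatchingSepCut (G : SimpleGraph V) (F : Set (Sym2 V)) (x y : V) : Prop :=
  IsSepCut G F x y ∧ ∀ e₁ ∈ F, ∀ e₂ ∈ F, ¬ EdgesAdj e₁ e₂

/-- The proper disconnection number. -/
noncomputable def pd (G : SimpleGraph V) : ℕ :=
  sInf {k | ∃ c : Sym2 V → ℕ, (∀ e ∈ G.edgeSet, c e < k) ∧
    ∀ x y : V, x ≠ y → ∃ F, IsProperSepCut G c F x y}

/-- The rainbow disconnection number. -/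
noncomputable def rd (G : SimpleGraph V) : ℕ :=
  sInf {k | ∃ c : Sym2 V → ℕ, (∀ e ∈ G.edgeSet, c e < k) ∧
    ∀ x y : V, x ≠ y → ∃ F, IsRainbowSepCut G c F x y}

/-- The chromatic index. -/
noncomputable def chromIndex (G : SimpleGraph V) : ℕ :=
  sInf {k | ∃ c : Sym2 V → ℕ, (∀ e ∈ G.edgeSet, c e < k) ∧
    ∀ e₁ ∈ G.edgeSet, ∀ e₂ ∈ G.edgeSet, EdgesAdj e₁ e₂ → c e₁ ≠ c e₂}

/-! ### Auxiliary development: Vizing's theorem -/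

namespace VZ

/-- A proper edge coloring of `H`. -/
def Proper (H : SimpleGraph V) (c : Sym2 V → ℕ) : Prop :=
  ∀ e₁ ∈ H.edgeSet, ∀ e₂ ∈ H.edgeSet, EdgesAdj e₁ e₂ → c e₁ ≠ c e₂

/-- Color `a` is not used on any edge of `H` at `v`. -/
def FreeAt (H : SimpleGraph V) (c : Sym2 V → ℕ) (v : V) (a : ℕ) : Prop :=
  ∀ e ∈ H.edgeSet, v ∈ e → c e ≠ a

def Bounded (H : SimpleGraph V) (c : Sym2 V → ℕ) (k : ℕ) : Prop :=
  ∀ e ∈ H.edgeSet, c e < k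

/-- Degrees are `< k`, stated combinatorially. -/
def DegBnd (G : SimpleGraph V) (k : ℕ) : Prop :=
  ∀ v : V, ∃ t : Finset (Sym2 V), (∀ e ∈ G.edgeSet, v ∈ e → e ∈ t) ∧ t.card < k

lemma mem_del_edgeSet {G : SimpleGraph V} {d e : Sym2 V} :
    e ∈ (G.deleteEdges {d}).edgeSet ↔ e ∈ G.edgeSet ∧ e ≠ d := by
  rw [edgeSet_deleteEdges]; simp

lemma sxy_mem_del {G : SimpleGraph V} {x y z : V} (h : G.Adj x z) (hzy : z ≠ y) :
    s(x, z) ∈ (G.deleteEdges {s(x, y)}).edgeSet := by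
  refine mem_del_edgeSet.2 ⟨(G.mem_edgeSet).2 h, fun hEq => ?_⟩
  rcases Sym2.eq_iff.1 hEq with ⟨-, rfl⟩ | ⟨rfl, rfl⟩
  · exact hzy rfl
  · exact h.ne rfl

lemma exists_free {H G : SimpleGraph V} (hle : H ≤ G) (c : Sym2 V → ℕ) (v : V) {k : ℕ}
    (t : Finset (Sym2 V)) (ht : ∀ e ∈ G.edgeSet, v ∈ e → e ∈ t) (htk : t.card < k) :
    ∃ a, a < k ∧ FreeAt H c v a := by
  classical
  have himg : (t.image c).card < (Finset.range k).card := by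
    simpa using lt_of_le_of_lt Finset.card_image_le htk
  have hns : ¬ Finset.range k ⊆ t.image c := fun hsub =>
    absurd (Finset.card_le_card hsub) (not_le.2 himg)
  obtain ⟨a, ha, hna⟩ := Finset.not_subset.1 hns
  refine ⟨a, by simpa using ha, fun e he hv hc => hna ?_⟩
  exact Finset.mem_image.2 ⟨e, ht e (edgeSet_mono hle he) hv, hc⟩

/-- Recolor a single (new) edge `d` with color `γ`. -/
lemma recolor {H H' : SimpleGraph V} {c : Sym2 V → ℕ} {d : Sym2 V} {γ k : ℕ}
    (hp : Proper H c) (hbnd : Bounded H c k) (hγ : γ < k)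
    (hH' : ∀ e ∈ H'.edgeSet, e ≠ d → e ∈ H.edgeSet)
    (hd : ∀ e ∈ H'.edgeSet, EdgesAdj e d → c e ≠ γ) :
    ∃ c₁ : Sym2 V → ℕ, (∀ e, e ≠ d → c₁ e = c e) ∧ c₁ d = γ ∧
      Proper H' c₁ ∧ Bounded H' c₁ k := by
  classical
  refine ⟨Function.update c d γ, fun e he => Function.update_of_ne he γ c,
    Function.update_self d γ c, ?_, ?_⟩
  · rintro e₁ h1 e₂ h2 ⟨hne, v, hv1, hv2⟩
    by_cases he1 : e₁ = d
    · have he2 : e₂ ≠ d := fun h => hne (he1.trans h.symm)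
      rw [he1, Function.update_self, Function.update_of_ne he2]
      exact fun h => hd e₂ h2 ⟨he2, v, hv2, he1 ▸ hv1⟩ h.symm
    · by_cases he2 : e₂ = d
      · rw [he2, Function.update_self, Function.update_of_ne he1]
        exact hd e₁ h1 ⟨he1, v, hv1, he2 ▸ hv2⟩
      · rw [Function.update_of_ne he1, Function.update_of_ne he2]
        exact hp e₁ (hH' _ h1 he1) e₂ (hH' _ h2 he2) ⟨hne, v, hv1, hv2⟩
  · intro e he
    by_cases hed : e = d
    · subst hed; rwa [Function.update_self]
    · rw [Function.update_of_ne hed]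
      exact hbnd e (hH' _ he hed)

/-- One fan-rotation step. -/
lemma step {G : SimpleGraph V} {c : Sym2 V → ℕ} {k : ℕ} {x y z : V} {b : ℕ}
    (hxy : G.Adj x y) (hxz : G.Adj x z) (hzy : z ≠ y)
    (hp : Proper (G.deleteEdges {s(x, y)}) c)
    (hbnd : Bounded (G.deleteEdges {s(x, y)}) c k)
    (hfree : FreeAt (G.deleteEdges {s(x, y)}) c y b)
    (hb : c s(x, z) = b) :
    ∃ c₁ : Sym2 V → ℕ, (∀ e, e ≠ s(x, y) → c₁ e = c e) ∧ c₁ s(x, y) = b ∧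
      Proper (G.deleteEdges {s(x, z)}) c₁ ∧ Bounded (G.deleteEdges {s(x, z)}) c₁ k := by
  have hxz_mem : s(x, z) ∈ (G.deleteEdges {s(x, y)}).edgeSet := sxy_mem_del hxz hzy
  have hbk : b < k := hb ▸ hbnd _ hxz_mem
  refine recolor hp hbnd hbk ?_ ?_
  · intro e he hne
    obtain ⟨heG, -⟩ := mem_del_edgeSet.1 he
    exact mem_del_edgeSet.2 ⟨heG, hne⟩
  · rintro e he ⟨hne, v, hv1, hv2⟩
    obtain ⟨heG, hed⟩ := mem_del_edgeSet.1 he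
    have heH : e ∈ (G.deleteEdges {s(x, y)}).edgeSet := mem_del_edgeSet.2 ⟨heG, hne⟩
    rcases Sym2.mem_iff.1 hv2 with rfl | rfl
    · -- shared vertex is x
      have hexz : e ≠ s(v, z) := hed
      intro hc
      exact hp e heH s(v, z) hxz_mem ⟨hexz, v, hv1, by simp⟩ (hc.trans hb.symm)
    · -- shared vertex is y
      exact hfree e heH hv1

lemma chain'_imp_mem {α : Type*} {R S : α → α → Prop} :
    ∀ {l : List α}, (∀ a ∈ l, ∀ b ∈ l, R a b → S a b) → List.Chain' R l → List.Chain' S l := by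
  intro l
  induction l with
  | nil => intro _ _; exact List.isChain_nil
  | cons a l ih =>
    intro h hc
    cases l with
    | nil => exact List.isChain_singleton a
    | cons b l' =>
      unfold List.Chain' at hc ⊢
      rw [List.isChain_cons_cons] at hc ⊢
      exact ⟨h a (by simp) b (by simp) hc.1,
        ih (fun u hu w hw => h u (by simp [hu]) w (by simp [hw])) hc.2⟩

/-- Rotating a fan: shift the colors of the fan edges down, uncoloring the last fan edge. -/
lemma rotate {G : SimpleGraph V} {k : ℕ} {x : V} :
    ∀ (n : ℕ) (ys : List V) (hne : ys ≠ []) (c : Sym2 V → ℕ),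
    ys.length ≤ n →
    ys.Nodup → (∀ y ∈ ys, G.Adj x y) →
    Proper (G.deleteEdges {s(x, ys.head hne)}) c →
    Bounded (G.deleteEdges {s(x, ys.head hne)}) c k →
    List.Chain' (fun u v => FreeAt (G.deleteEdges {s(x, ys.head hne)}) c u (c s(x, v))) ys →
    ∃ c' : Sym2 V → ℕ,
      Proper (G.deleteEdges {s(x, ys.getLast hne)}) c' ∧
      Bounded (G.deleteEdges {s(x, ys.getLast hne)}) c' k ∧
      (∀ e, x ∉ e → c' e = c e) ∧
      (∀ a, FreeAt (G.deleteEdges {s(x, ys.getLast hne)}) c' x a ↔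
        FreeAt (G.deleteEdges {s(x, ys.head hne)}) c x a) ∧
      (∀ b, FreeAt (G.deleteEdges {s(x, ys.head hne)}) c (ys.getLast hne) b →
        FreeAt (G.deleteEdges {s(x, ys.getLast hne)}) c' (ys.getLast hne) b) ∧
      (∀ z, z ∉ ys → c' s(x, z) = c s(x, z)) ∧
      List.Chain' (fun u v => c' s(x, u) = c s(x, v)) ys := by
  intro n
  induction n with
  | zero =>
    intro ys hne c hlen
    cases ys with
    | nil => exact absurd rfl hne
    | cons a l => simp at hlen
  | succ n ih =>
    intro ys hne c hlen hnd hadj hp hbnd hch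
    match ys, hne, hlen, hnd, hadj, hp, hbnd, hch with
    | [y], _, _, _, _, hp, hbnd, hch =>
      simp only [List.head_cons, List.getLast_singleton] at hp hbnd hch ⊢
      exact ⟨c, hp, hbnd, fun _ _ => rfl, fun a => Iff.rfl, fun b h => h, fun z _ => rfl,
        List.isChain_singleton y⟩
    | y₀ :: y₁ :: rest, _, hlen, hnd, hadj, hp, hbnd, hch =>
      simp only [List.head_cons] at hp hbnd hch
      have hne' : y₁ :: rest ≠ [] := List.cons_ne_nil _ _
      have hgl : (y₀ :: y₁ :: rest).getLast (List.cons_ne_nil _ _) =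
          (y₁ :: rest).getLast hne' := List.getLast_cons hne'
      have hadj₀ : G.Adj x y₀ := hadj _ (by simp)
      have hadj₁ : G.Adj x y₁ := hadj _ (by simp)
      have hnd' := List.nodup_cons.1 hnd
      have hy0nm : y₀ ∉ y₁ :: rest := hnd'.1
      have hy01 : y₁ ≠ y₀ := fun h => hy0nm (by simp [h])
      obtain ⟨hf01, hch'⟩ := List.isChain_cons_cons.1 hch
      obtain ⟨c₁, hc₁ne, hc₁val, hp₁, hbnd₁⟩ :=
        step hadj₀ hadj₁ hy01 hp hbnd hf01 rfl
      have hxs0 : ∀ u : V, u ≠ y₀ → u ≠ x → ∀ e ∈ (G.deleteEdges {s(x, y₁)}).edgeSet,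
          u ∈ e → e ∈ (G.deleteEdges {s(x, y₀)}).edgeSet ∧ c₁ e = c e := by
        intro u hu0 hux e he hue
        obtain ⟨heG, he1⟩ := mem_del_edgeSet.1 he
        have he0 : e ≠ s(x, y₀) := by
          rintro rfl
          rcases Sym2.mem_iff.1 hue with rfl | rfl
          · exact hux rfl
          · exact hu0 rfl
        exact ⟨mem_del_edgeSet.2 ⟨heG, he0⟩, hc₁ne e he0⟩
      have hfree_tr : ∀ u : V, u ≠ y₀ → u ≠ x → ∀ a, FreeAt (G.deleteEdges {s(x, y₀)}) c u a →
          FreeAt (G.deleteEdges {s(x, y₁)}) c₁ u a := by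
        intro u h1 h2 a hf e he hue
        obtain ⟨hm, hc⟩ := hxs0 u h1 h2 e he hue
        rw [hc]; exact hf e hm hue
      have hmemne : ∀ u ∈ y₁ :: rest, u ≠ y₀ ∧ u ≠ x := fun u hu =>
        ⟨fun h => hy0nm (h ▸ hu), (hadj u (by simp [hu])).ne'⟩
      have hsx_ne : ∀ u : V, u ≠ y₀ → s(x, u) ≠ s(x, y₀) := fun u hu h =>
        hu (Sym2.congr_right.1 h)
      have chain₁ : List.Chain' (fun u v => FreeAt (G.deleteEdges {s(x, y₁)}) c₁ u
          (c₁ s(x, v))) (y₁ :: rest) := by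
        refine chain'_imp_mem (fun u hu v hv h => ?_) hch'
        obtain ⟨hu0, hux⟩ := hmemne u hu
        obtain ⟨hv0, -⟩ := hmemne v hv
        rw [hc₁ne _ (hsx_ne v hv0)]
        exact hfree_tr u hu0 hux _ h
      obtain ⟨c', P1, P2, P3, P4, P5, P6, P7⟩ :=
        ih (y₁ :: rest) hne' c₁ (by simp at hlen ⊢; omega)
          hnd'.2 (fun y hy => hadj y (by simp [hy]))
          (by simpa using hp₁) (by simpa using hbnd₁) (by simpa using chain₁)
      have hmL := List.getLast_mem hne'
      obtain ⟨hm0, hmx⟩ := hmemne _ hmL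
      have hiffx : ∀ a, (FreeAt (G.deleteEdges {s(x, y₁)}) c₁ x a ↔
          FreeAt (G.deleteEdges {s(x, y₀)}) c x a) := by
        intro a
        constructor
        · intro h e he hx
          by_cases he1 : e = s(x, y₁)
          · have h0mem : s(x, y₀) ∈ (G.deleteEdges {s(x, y₁)}).edgeSet :=
              sxy_mem_del hadj₀ (fun h => hy01 h.symm)
            have := h _ h0mem (by simp)
            rw [hc₁val] at this
            rw [he1]; exact this
          · have hm : e ∈ (G.deleteEdges {s(x, y₁)}).edgeSet :=
              mem_del_edgeSet.2 ⟨(mem_del_edgeSet.1 he).1, he1⟩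
            have := h e hm hx
            rwa [hc₁ne e (mem_del_edgeSet.1 he).2] at this
        · intro h e he hx
          by_cases he0 : e = s(x, y₀)
          · rw [he0, hc₁val]
            exact h s(x, y₁) (sxy_mem_del hadj₁ hy01) (by simp)
          · rw [hc₁ne e he0]
            exact h e (mem_del_edgeSet.2 ⟨(mem_del_edgeSet.1 he).1, he0⟩) hx
      rw [hgl]
      refine ⟨c', by simpa using P1, by simpa using P2, ?_, ?_, ?_, ?_, ?_⟩
      · intro e hx
        rw [P3 e hx, hc₁ne e (fun h => hx (h ▸ by simp))]
      · have P4' : ∀ a, FreeAt (G.deleteEdges {s(x, (y₁ :: rest).getLast hne')}) c' x a ↔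
            FreeAt (G.deleteEdges {s(x, y₁)}) c₁ x a := by simpa using P4
        intro a
        exact (P4' a).trans (hiffx a)
      · intro b hb
        have := P5 b (by simpa using hfree_tr _ hm0 hmx b hb)
        simpa using this
      · intro z hz
        have hz0 : z ≠ y₀ := fun h => hz (by simp [h])
        rw [P6 z (fun h => hz (by simp [h])), hc₁ne _ (hsx_ne z hz0)]
      · unfold List.Chain'
        rw [List.isChain_cons_cons]
        constructor
        · rw [P6 y₀ hy0nm, hc₁val]
        · refine chain'_imp_mem (fun u hu v hv h => ?_) P7
          obtain ⟨hv0, -⟩ := hmemne v hv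
          rw [h, hc₁ne _ (hsx_ne v hv0)]

/-- The subgraph of edges colored `α` or `β`. -/
def Kg (H : SimpleGraph V) (c : Sym2 V → ℕ) (α β : ℕ) : SimpleGraph V where
  Adj u v := H.Adj u v ∧ (c s(u, v) = α ∨ c s(u, v) = β)
  symm := ⟨by rintro u v ⟨h, hc⟩; exact ⟨h.symm, by rwa [Sym2.eq_swap]⟩⟩
  loopless := ⟨fun v h => H.loopless.irrefl v h.1⟩

/-- Swapping the colors `α`/`β` on the Kempe chain through `w₀`. -/
lemma swap (H : SimpleGraph V) (c : Sym2 V → ℕ) {k : ℕ} (α β : ℕ) (w₀ : V)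
    (hp : Proper H c) (hbnd : Bounded H c k) (hα : α < k) (hβ : β < k) (hαβ : α ≠ β) :
    ∃ c', Proper H c' ∧ Bounded H c' k ∧
      (∀ v, ¬ (Kg H c α β).Reachable w₀ v → ∀ e ∈ H.edgeSet, v ∈ e → c' e = c e) ∧
      (∀ v, (Kg H c α β).Reachable w₀ v → FreeAt H c v β → FreeAt H c' v α) := by
  classical
  set K := Kg H c α β with hK
  set P : Sym2 V → Prop := fun e =>
    e ∈ H.edgeSet ∧ (c e = α ∨ c e = β) ∧ ∃ v ∈ e, K.Reachable w₀ v with hPdef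
  set c' : Sym2 V → ℕ := fun e => if P e then (if c e = α then β else α) else c e with hc'
  have hL3 : ∀ e, P e → ∀ v ∈ e, K.Reachable w₀ v := by
    intro e hPe
    induction e using Sym2.ind with
    | _ a b =>
      obtain ⟨he, hcol, u, hu, hru⟩ := hPe
      have hKab : K.Adj a b := ⟨H.mem_edgeSet.1 he, hcol⟩
      intro v hv
      rcases Sym2.mem_iff.1 hv with rfl | rfl <;> rcases Sym2.mem_iff.1 hu with rfl | rfl
      · exact hru
      · exact hru.trans hKab.symm.reachable
      · exact hru.trans hKab.reachable
      · exact hru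
  have hswap_val : ∀ e, P e → c' e = (if c e = α then β else α) := by
    intro e hPe; simp only [hc', if_pos hPe]
  have hkeep : ∀ e, ¬ P e → c' e = c e := fun e h => by simp only [hc', if_neg h]
  refine ⟨c', ?_, ?_, ?_, ?_⟩
  · rintro e₁ h1 e₂ h2 ⟨hne, v, hv1, hv2⟩ hceq
    by_cases hP1 : P e₁ <;> by_cases hP2 : P e₂
    · rw [hswap_val _ hP1, hswap_val _ hP2] at hceq
      have hne' := hp e₁ h1 e₂ h2 ⟨hne, v, hv1, hv2⟩
      have hβα : ¬ (β = α) := fun h => hαβ h.symm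
      rcases hP1.2.1 with hc1 | hc1 <;> rcases hP2.2.1 with hc2 | hc2
      · exact hne' (hc1.trans hc2.symm)
      · rw [hc1, hc2, if_pos rfl, if_neg hβα] at hceq
        exact hαβ hceq.symm
      · rw [hc1, hc2, if_neg hβα, if_pos rfl] at hceq
        exact hαβ hceq
      · exact hne' (hc1.trans hc2.symm)
    · -- e₁ swapped, e₂ not
      have hv2r : K.Reachable w₀ v := hL3 e₁ hP1 v hv1
      have hc2 : ¬ (c e₂ = α ∨ c e₂ = β) := by
        intro hcol
        exact hP2 ⟨h2, hcol, v, hv2, hv2r⟩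
      rw [hswap_val _ hP1, hkeep _ hP2] at hceq
      have hβα : ¬ (β = α) := fun h => hαβ h.symm
      rcases hP1.2.1 with hc1 | hc1
      · rw [hc1, if_pos rfl] at hceq
        exact hc2 (Or.inr hceq.symm)
      · rw [hc1, if_neg hβα] at hceq
        exact hc2 (Or.inl hceq.symm)
    · have hv1r : K.Reachable w₀ v := hL3 e₂ hP2 v hv2
      have hc1 : ¬ (c e₁ = α ∨ c e₁ = β) := by
        intro hcol
        exact hP1 ⟨h1, hcol, v, hv1, hv1r⟩
      rw [hkeep _ hP1, hswap_val _ hP2] at hceq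
      have hβα : ¬ (β = α) := fun h => hαβ h.symm
      rcases hP2.2.1 with hc2 | hc2
      · rw [hc2, if_pos rfl] at hceq
        exact hc1 (Or.inr hceq)
      · rw [hc2, if_neg hβα] at hceq
        exact hc1 (Or.inl hceq)
    · rw [hkeep _ hP1, hkeep _ hP2] at hceq
      exact hp e₁ h1 e₂ h2 ⟨hne, v, hv1, hv2⟩ hceq
  · intro e he
    by_cases hPe : P e
    · rw [hswap_val _ hPe]
      split <;> assumption
    · rw [hkeep _ hPe]; exact hbnd e he
  · intro v hv e he hve
    refine hkeep _ (fun hPe => hv (hL3 e hPe v hve))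
  · intro v hrv hf e he hve hcα
    by_cases hPe : P e
    · rw [hswap_val _ hPe] at hcα
      rcases hPe.2.1 with hc1 | hc1
      · rw [if_pos hc1] at hcα; exact hαβ hcα.symm
      · exact hf e he hve hc1
    · rw [hkeep _ hPe] at hcα
      exact hPe ⟨he, Or.inl hcα, v, hve, hrv⟩

lemma walk_transfer {K M : SimpleGraph V} {x : V}
    (hM : ∀ a b, K.Adj a b → a ≠ x → b ≠ x → M.Adj a b) :
    ∀ {a y : V} (q : K.Walk a y), x ∉ q.support → M.Reachable a y := by
  intro a y q
  induction q with
  | nil => exact fun _ => Reachable.refl _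
  | @cons u v w h q ih =>
    intro hs
    rw [Walk.support_cons] at hs
    have hux : u ≠ x := fun h' => hs (by simp [h'])
    have hxs : x ∉ q.support := fun h' => hs (by simp [h'])
    have hvx : v ≠ x := fun h' => hxs (h' ▸ q.start_mem_support)
    exact ((hM u v h hux hvx).reachable).trans (ih hxs)

lemma reach_decomp {K : SimpleGraph V} {x u₀ y : V}
    (huniq : ∀ v, K.Adj x v → v = u₀) (hy : y ≠ x) (hr : K.Reachable x y)
    {M : SimpleGraph V} (hM : ∀ a b, K.Adj a b → a ≠ x → b ≠ x → M.Adj a b) :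
    M.Reachable u₀ y := by
  classical
  obtain ⟨w⟩ := hr
  obtain ⟨p, hpp⟩ := w.toPath
  clear w
  cases p with
  | nil => exact absurd rfl hy
  | @cons _ v _ h q =>
    obtain ⟨hq, hxq⟩ := (Walk.cons_isPath_iff h q).1 hpp
    have := huniq v h
    subst this
    exact walk_transfer hM q hxq

/-- In a graph of max degree ≤ 2, one cannot reach, from a vertex of degree ≤ 1,
two distinct other vertices of degree ≤ 1. -/
lemma no_three_aux (M : SimpleGraph V)
    (hdeg2 : ∀ v u₁ u₂ u₃, M.Adj v u₁ → M.Adj v u₂ → M.Adj v u₃ → u₁ = u₂ ∨ u₁ = u₃ ∨ u₂ = u₃) :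
    ∀ (n : ℕ) (u a : V) {b c : V} (p : M.Walk a b) (q : M.Walk a c),
    p.length ≤ n → p.IsPath → q.IsPath → u ∉ p.support → u ∉ q.support → M.Adj u a →
    (∀ v₁ v₂, M.Adj b v₁ → M.Adj b v₂ → v₁ = v₂) →
    (∀ v₁ v₂, M.Adj c v₁ → M.Adj c v₂ → v₁ = v₂) →
    b ≠ c → False := by
  intro n
  induction n with
  | zero =>
    intro u a b c p q hlen hpp hqp hup huq hua hb hc hbc
    cases p with
    | nil =>
      cases q with
      | nil => exact hbc rfl
      | @cons _ v _ h q' =>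
        have : v = u := hb v u h hua.symm
        exact huq (by simp [Walk.support_cons, this.symm])
    | cons h p' => simp at hlen
  | succ n ih =>
    intro u a b c p q hlen hpp hqp hup huq hua hb hc hbc
    cases p with
    | nil =>
      cases q with
      | nil => exact hbc rfl
      | @cons _ v _ h q' =>
        have : v = u := hb v u h hua.symm
        exact huq (by simp [Walk.support_cons, this.symm])
    | @cons _ d _ h1 p' =>
      cases q with
      | nil =>
        have : d = u := hc d u h1 hua.symm
        exact hup (by simp [Walk.support_cons, this.symm])
      | @cons _ d' _ h2 q' =>
        have hdu : d ≠ u := by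
          intro h'
          exact hup (by simp [Walk.support_cons, h'.symm, Walk.start_mem_support])
        have hd'u : d' ≠ u := by
          intro h'
          exact huq (by simp [Walk.support_cons, h'.symm, Walk.start_mem_support])
        have hdd' : d = d' := by
          rcases hdeg2 a d d' u h1 h2 hua.symm with h' | h' | h'
          · exact h'
          · exact absurd h' hdu
          · exact absurd h' hd'u
        subst hdd'
        obtain ⟨hp', hap'⟩ := (Walk.cons_isPath_iff h1 p').1 hpp
        obtain ⟨hq', haq'⟩ := (Walk.cons_isPath_iff h2 q').1 hqp
        exact ih a d p' q' (by simpa using hlen) hp' hq' hap' haq' h1 hb hc hbc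

lemma no_three (M : SimpleGraph V) {a b c : V}
    (hdeg2 : ∀ v u₁ u₂ u₃, M.Adj v u₁ → M.Adj v u₂ → M.Adj v u₃ → u₁ = u₂ ∨ u₁ = u₃ ∨ u₂ = u₃)
    (ha : ∀ v₁ v₂, M.Adj a v₁ → M.Adj a v₂ → v₁ = v₂)
    (hb : ∀ v₁ v₂, M.Adj b v₁ → M.Adj b v₂ → v₁ = v₂)
    (hc : ∀ v₁ v₂, M.Adj c v₁ → M.Adj c v₂ → v₁ = v₂)
    (hab : a ≠ b) (hac : a ≠ c) (hbc : b ≠ c)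
    (hrab : M.Reachable a b) (hrac : M.Reachable a c) : False := by
  classical
  obtain ⟨wb⟩ := hrab
  obtain ⟨pb, hpb⟩ := wb.toPath
  obtain ⟨wc⟩ := hrac
  obtain ⟨pc, hpc⟩ := wc.toPath
  clear wb wc
  cases pb with
  | nil => exact hab rfl
  | @cons _ d _ h1 p' =>
    cases pc with
    | nil => exact hac rfl
    | @cons _ d' _ h2 q' =>
      have hdd' : d = d' := ha d d' h1 h2
      subst hdd'
      obtain ⟨hp', hap'⟩ := (Walk.cons_isPath_iff h1 p').1 hpb
      obtain ⟨hq', haq'⟩ := (Walk.cons_isPath_iff h2 q').1 hpc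
      exact no_three_aux M hdeg2 p'.length a d p' q' le_rfl hp' hq' hap' haq' h1 hb hc hbc

lemma final_color {G : SimpleGraph V} {x y : V} {γ k : ℕ} {c : Sym2 V → ℕ}
    (hadj : G.Adj x y) (hp : Proper (G.deleteEdges {s(x, y)}) c)
    (hbnd : Bounded (G.deleteEdges {s(x, y)}) c k) (hγ : γ < k)
    (hfx : FreeAt (G.deleteEdges {s(x, y)}) c x γ)
    (hfy : FreeAt (G.deleteEdges {s(x, y)}) c y γ) :
    ∃ c', Proper G c' ∧ Bounded G c' k := by
  have hd : ∀ e ∈ G.edgeSet, EdgesAdj e s(x, y) → c e ≠ γ := by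
    rintro e he ⟨hne, v, hv1, hv2⟩
    have heH : e ∈ (G.deleteEdges {s(x, y)}).edgeSet := mem_del_edgeSet.2 ⟨he, hne⟩
    rcases Sym2.mem_iff.1 hv2 with rfl | rfl
    · exact hfx e heH hv1
    · exact hfy e heH hv1
  obtain ⟨c₁, -, -, hp₁, hb₁⟩ := recolor (H' := G) (d := s(x, y)) hp hbnd hγ
    (fun e he hne => mem_del_edgeSet.2 ⟨he, hne⟩) hd
  exact ⟨c₁, hp₁, hb₁⟩

/-- The Kempe subgraph avoiding `x`. -/
def Mg (G : SimpleGraph V) (c : Sym2 V → ℕ) (x : V) (α b : ℕ) : SimpleGraph V where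
  Adj u v := u ≠ x ∧ v ≠ x ∧ G.Adj u v ∧ (c s(u, v) = α ∨ c s(u, v) = b)
  symm := ⟨by rintro u v ⟨h1, h2, h3, h4⟩; exact ⟨h2, h1, h3.symm, by rwa [Sym2.eq_swap]⟩⟩
  loopless := ⟨fun v h => G.loopless.irrefl v h.2.2.1⟩

lemma extend_aux [Fintype V] {G : SimpleGraph V} {k : ℕ} (hdeg : DegBnd G k) (x y₀ : V) :
    ∀ (n : ℕ) (ys : List V) (hne : ys ≠ []) (c : Sym2 V → ℕ),
    Fintype.card V ≤ ys.length + n →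
    ys.head hne = y₀ →
    ys.Nodup → (∀ y ∈ ys, G.Adj x y) →
    Proper (G.deleteEdges {s(x, y₀)}) c →
    Bounded (G.deleteEdges {s(x, y₀)}) c k →
    List.Chain' (fun u v => FreeAt (G.deleteEdges {s(x, y₀)}) c u (c s(x, v))) ys →
    ∃ c', Proper G c' ∧ Bounded G c' k := by
  intro n
  induction n using Nat.strong_induction_on with
  | _ n ihn =>
  intro ys hne c hcard hhead hnd hadj hp hbnd hch
  classical
  obtain ⟨yt, hyt⟩ : ∃ t, t = ys.getLast hne := ⟨_, rfl⟩
  have hyt_mem : yt ∈ ys := hyt ▸ List.getLast_mem hne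
  have hadj_t : G.Adj x yt := hadj _ hyt_mem
  have hytx : yt ≠ x := hadj_t.ne'
  obtain ⟨ty, hty, htyk⟩ := hdeg yt
  obtain ⟨b, hbk, hbfree⟩ :=
    exists_free (deleteEdges_le {s(x, y₀)}) c yt ty hty htyk
  by_cases hbx : FreeAt (G.deleteEdges {s(x, y₀)}) c x b
  · -- Case 0: `b` is free at `x` and at `yt`; rotate the whole fan and color `s(x,yt)` by `b`.
    obtain ⟨c', R1, R2, R3, R4, R5, R6, R7⟩ :=
      rotate ys.length ys hne c le_rfl hnd hadj (by rwa [hhead]) (by rwa [hhead])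
        (by rwa [hhead])
    rw [hhead] at R4 R5
    rw [← hyt] at R1 R2 R4 R5
    exact final_color hadj_t R1 R2 hbk ((R4 b).2 hbx) (R5 b hbfree)
  · -- `b` is used at `x`.
    have hbx' : ∃ e, ∃ _ : e ∈ (G.deleteEdges {s(x, y₀)}).edgeSet, x ∈ e ∧ c e = b := by
      rw [FreeAt] at hbx
      push_neg at hbx
      obtain ⟨e, he, hxe, hce⟩ := hbx
      exact ⟨e, he, hxe, hce⟩
    obtain ⟨e, he, hxe, hce⟩ := hbx'
    obtain ⟨z, rfl⟩ := Sym2.mem_iff_exists.1 hxe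
    have hGxz : G.Adj x z := G.mem_edgeSet.1 (mem_del_edgeSet.1 he).1
    have hsz0 : s(x, z) ≠ s(x, y₀) := (mem_del_edgeSet.1 he).2
    have hzy0 : z ≠ y₀ := fun h => hsz0 (by rw [h])
    have hzyt : z ≠ yt := by
      intro h
      subst h
      exact hbfree _ he (by simp) hce
    have hzx : z ≠ x := hGxz.ne'
    by_cases hzys : z ∈ ys
    · -- Kempe endgame.
      obtain ⟨l₁, l₂, hsplit⟩ := List.append_of_mem hzys
      subst hsplit
      have hl₁ne : l₁ ≠ [] := by
        rintro rfl
        simp only [List.nil_append, List.head_cons] at hhead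
        exact hzy0 hhead
      obtain ⟨l₁', w, hl₁⟩ := l₁.eq_nil_or_concat.resolve_left hl₁ne
      rw [List.concat_eq_append] at hl₁
      subst hl₁
      have hassoc : (l₁' ++ [w]) ++ z :: l₂ = l₁' ++ w :: z :: l₂ := by simp
      -- fan fact : b is free at w
      have hcw : FreeAt (G.deleteEdges {s(x, y₀)}) c w b := by
        have h0 := hch
        rw [hassoc] at h0
        have h2 := (List.isChain_split.1 h0).2
        have := (List.isChain_cons_cons.1 h2).1
        rwa [hce] at this
      have hdisj := (List.nodup_append'.1 hnd).2.2
      have hw_l₁ : w ∈ l₁' ++ [w] := by simp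
      have hwz : w ≠ z := fun h => hdisj hw_l₁ (by simp [h])
      have hyt_zl : yt ∈ z :: l₂ := by
        have h1 : yt = (z :: l₂).getLast (List.cons_ne_nil _ _) := by
          rw [hyt]; simp [List.getLast_append]
        rw [h1]; exact List.getLast_mem _
      have hwyt : w ≠ yt := fun h => hdisj hw_l₁ (h ▸ hyt_zl)
      have hadjw : G.Adj x w := hadj w (by simp)
      have hwx : w ≠ x := hadjw.ne'
      -- a color free at x
      obtain ⟨tx, htx, htxk⟩ := hdeg x
      obtain ⟨α, hαk, hαfree⟩ :=
        exists_free (deleteEdges_le {s(x, y₀)}) c x tx htx htxk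
      have hαb : α ≠ b := fun h => hαfree _ he (by simp) (hce.trans h.symm)
      set M := Mg G c x α b with hM
      have hM_edge : ∀ {a b' : V}, M.Adj a b' → s(a, b') ∈ (G.deleteEdges {s(x, y₀)}).edgeSet := by
        rintro a b' ⟨ha, hb', hG, -⟩
        refine mem_del_edgeSet.2 ⟨G.mem_edgeSet.2 hG, fun hEq => ?_⟩
        have hxm : x ∈ s(a, b') := by rw [hEq]; simp
        rcases Sym2.mem_iff.1 hxm with h | h
        · exact ha h.symm
        · exact hb' h.symm
      have key : ∀ {v ua ub : V}, M.Adj v ua → M.Adj v ub → ua ≠ ub →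
          c s(v, ua) ≠ c s(v, ub) := by
        intro v ua ub ha hb hne'
        refine hp _ (hM_edge ha) _ (hM_edge hb) ⟨?_, v, by simp, by simp⟩
        exact fun h => hne' (Sym2.congr_right.1 h)
      have hdeg2 : ∀ v u₁ u₂ u₃, M.Adj v u₁ → M.Adj v u₂ → M.Adj v u₃ →
          u₁ = u₂ ∨ u₁ = u₃ ∨ u₂ = u₃ := by
        intro v u₁ u₂ u₃ h1 h2 h3
        by_contra hcon
        push_neg at hcon
        obtain ⟨n12, n13, n23⟩ := hcon
        have c1 := h1.2.2.2
        have c2 := h2.2.2.2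
        have c3 := h3.2.2.2
        rcases c1 with h | h <;> rcases c2 with h' | h' <;> rcases c3 with h'' | h''
        · exact key h1 h2 n12 (h.trans h'.symm)
        · exact key h1 h2 n12 (h.trans h'.symm)
        · exact key h1 h3 n13 (h.trans h''.symm)
        · exact key h2 h3 n23 (h'.trans h''.symm)
        · exact key h2 h3 n23 (h'.trans h''.symm)
        · exact key h1 h3 n13 (h.trans h''.symm)
        · exact key h1 h2 n12 (h.trans h'.symm)
        · exact key h1 h2 n12 (h.trans h'.symm)
      have huniq_bfree : ∀ v, FreeAt (G.deleteEdges {s(x, y₀)}) c v b →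
          ∀ u₁ u₂, M.Adj v u₁ → M.Adj v u₂ → u₁ = u₂ := by
        intro v hv u₁ u₂ h1 h2
        by_contra hne'
        have ha1 : c s(v, u₁) = α := h1.2.2.2.resolve_right (hv _ (hM_edge h1) (by simp))
        have ha2 : c s(v, u₂) = α := h2.2.2.2.resolve_right (hv _ (hM_edge h2) (by simp))
        exact key h1 h2 hne' (ha1.trans ha2.symm)
      have huniq_z : ∀ u₁ u₂, M.Adj z u₁ → M.Adj z u₂ → u₁ = u₂ := by
        have hNb : ∀ {u : V}, M.Adj z u → c s(z, u) = α := by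
          intro u h
          refine h.2.2.2.resolve_right (fun hcb => ?_)
          refine hp _ (hM_edge h) _ he ⟨?_, z, by simp, by simp⟩ (hcb.trans hce.symm)
          intro hEq
          have hxm : x ∈ s(z, u) := by rw [hEq]; simp
          rcases Sym2.mem_iff.1 hxm with hh | hh
          · exact hzx hh.symm
          · exact h.2.1 hh.symm
        intro u₁ u₂ h1 h2
        by_contra hne'
        exact key h1 h2 hne' ((hNb h1).trans (hNb h2).symm)
      by_cases hzw : M.Reachable z w
      · -- CASE 2 : rotate the full fan, finish at yt.
        have hno : ¬ M.Reachable w yt := by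
          intro hr
          exact no_three M hdeg2 (huniq_bfree w hcw) huniq_z (huniq_bfree yt hbfree)
            hwz hwyt hzyt hzw.symm hr
        obtain ⟨c', R1, R2, R3, R4, R5, R6, R7⟩ :=
          rotate ((l₁' ++ [w]) ++ z :: l₂).length _ hne c le_rfl hnd hadj (by rwa [hhead])
            (by rwa [hhead]) (by rwa [hhead])
        rw [hhead] at R4 R5
        rw [← hyt] at R1 R2 R4 R5
        have hx'α : FreeAt (G.deleteEdges {s(x, yt)}) c' x α := (R4 α).2 hαfree
        -- the b-colored edge at x is now s(x,w)
        have hc'w : c' s(x, w) = b := by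
          have h0 := R7
          rw [hassoc] at h0
          have h2 := (List.isChain_split.1 h0).2
          have := (List.isChain_cons_cons.1 h2).1
          rwa [hce] at this
        have hxwmem : s(x, w) ∈ (G.deleteEdges {s(x, yt)}).edgeSet := sxy_mem_del hadjw hwyt
        have huniqK : ∀ v, (Kg (G.deleteEdges {s(x, yt)}) c' α b).Adj x v → v = w := by
          rintro v ⟨hv1, hv2⟩
          have hvmem : s(x, v) ∈ (G.deleteEdges {s(x, yt)}).edgeSet :=
            (G.deleteEdges {s(x, yt)}).mem_edgeSet.2 hv1
          have hcv : c' s(x, v) = b := hv2.resolve_left (hx'α _ hvmem (by simp))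
          by_contra hvw
          exact R1 _ hvmem _ hxwmem ⟨fun hEq => hvw (Sym2.congr_right.1 hEq), x, by simp, by simp⟩
            (hcv.trans hc'w.symm)
        have hKnr : ¬ (Kg (G.deleteEdges {s(x, yt)}) c' α b).Reachable x yt := by
          intro hr
          apply hno
          refine reach_decomp huniqK hytx hr (M := M) ?_
          rintro a b' ⟨hHt, hcol⟩ ha hb'
          have hGa : G.Adj a b' := (deleteEdges_adj.1 hHt).1
          have hxne : x ∉ s(a, b') := by
            intro hxm
            rcases Sym2.mem_iff.1 hxm with h | h
            · exact ha h.symm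
            · exact hb' h.symm
          have hcc : c' s(a, b') = c s(a, b') := R3 _ hxne
          exact ⟨ha, hb', hGa, by rwa [hcc] at hcol⟩
        obtain ⟨c'', S1, S2, S3, S4⟩ :=
          swap (G.deleteEdges {s(x, yt)}) c' α b yt R1 R2 hαk hbk hαb
        have hx'' : FreeAt (G.deleteEdges {s(x, yt)}) c'' x α := by
          intro e' he' hxe'
          rw [S3 x (fun hr => hKnr hr.symm) e' he' hxe']
          exact hx'α e' he' hxe'
        have hyt'' : FreeAt (G.deleteEdges {s(x, yt)}) c'' yt α :=
          S4 yt (Reachable.refl _) (R5 b hbfree)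
        exact final_color hadj_t S1 S2 hαk hx'' hyt''
      · -- CASE 1 : rotate the fan up to w, finish at w.
        have hl₁ne' : l₁' ++ [w] ≠ [] := by simp
        have hheadp : (l₁' ++ [w]).head hl₁ne' = y₀ := by
          rw [← hhead]
          by_cases hl : l₁' = []
          · subst hl; simp
          · simp [List.head_append, hl]
        have hlast : (l₁' ++ [w]).getLast hl₁ne' = w := List.getLast_concat
        have hchp : List.Chain' (fun u v =>
            FreeAt (G.deleteEdges {s(x, y₀)}) c u (c s(x, v))) (l₁' ++ [w]) := by
          have h0 := hch
          rw [hassoc] at h0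
          exact (List.isChain_split.1 h0).1
        obtain ⟨c', R1, R2, R3, R4, R5, R6, R7⟩ :=
          rotate (l₁' ++ [w]).length _ hl₁ne' c le_rfl (List.nodup_append.1 hnd).1
            (fun y hy => hadj y (List.mem_append.2 (Or.inl hy))) (by rwa [hheadp])
            (by rwa [hheadp]) (by rwa [hheadp])
        rw [hheadp] at R4 R5
        rw [hlast] at R1 R2 R4 R5
        have hx'α : FreeAt (G.deleteEdges {s(x, w)}) c' x α := (R4 α).2 hαfree
        have hznotin : z ∉ l₁' ++ [w] := fun hzin => hdisj hzin (by simp)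
        have hc'z : c' s(x, z) = b := (R6 z hznotin).trans hce
        have hszw_mem : s(x, z) ∈ (G.deleteEdges {s(x, w)}).edgeSet :=
          sxy_mem_del hGxz (fun h => hwz h.symm)
        have huniqK : ∀ v, (Kg (G.deleteEdges {s(x, w)}) c' α b).Adj x v → v = z := by
          rintro v ⟨hv1, hv2⟩
          have hvmem : s(x, v) ∈ (G.deleteEdges {s(x, w)}).edgeSet :=
            (G.deleteEdges {s(x, w)}).mem_edgeSet.2 hv1
          have hcv : c' s(x, v) = b := hv2.resolve_left (hx'α _ hvmem (by simp))
          by_contra hvz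
          exact R1 _ hvmem _ hszw_mem ⟨fun hEq => hvz (Sym2.congr_right.1 hEq), x, by simp, by simp⟩
            (hcv.trans hc'z.symm)
        have hKnr : ¬ (Kg (G.deleteEdges {s(x, w)}) c' α b).Reachable x w := by
          intro hr
          apply hzw
          refine reach_decomp huniqK hwx hr (M := M) ?_
          rintro a b' ⟨hHt, hcol⟩ ha hb'
          have hGa : G.Adj a b' := (deleteEdges_adj.1 hHt).1
          have hxne : x ∉ s(a, b') := by
            intro hxm
            rcases Sym2.mem_iff.1 hxm with h | h
            · exact ha h.symm
            · exact hb' h.symm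
          have hcc : c' s(a, b') = c s(a, b') := R3 _ hxne
          exact ⟨ha, hb', hGa, by rwa [hcc] at hcol⟩
        obtain ⟨c'', S1, S2, S3, S4⟩ :=
          swap (G.deleteEdges {s(x, w)}) c' α b w R1 R2 hαk hbk hαb
        have hx'' : FreeAt (G.deleteEdges {s(x, w)}) c'' x α := by
          intro e' he' hxe'
          rw [S3 x (fun hr => hKnr hr.symm) e' he' hxe']
          exact hx'α e' he' hxe'
        have hw'' : FreeAt (G.deleteEdges {s(x, w)}) c'' w α :=
          S4 w (Reachable.refl _) (R5 b hcw)
        exact final_color hadjw S1 S2 hαk hx'' hw''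
    · -- extend the fan by z
      have hnd' : (ys ++ [z]).Nodup := by
        rw [List.nodup_append']
        exact ⟨hnd, List.nodup_singleton z, fun a ha hb => hzys ((List.mem_singleton.1 hb) ▸ ha)⟩
      have hlen1 : ys.length + 1 ≤ Fintype.card V := by
        have := hnd'.length_le_card
        simpa using this
      have hn1 : 1 ≤ n := by omega
      refine ihn (n - 1) (by omega) (ys ++ [z]) (by simp) c (by simp; omega) ?_ hnd' ?_ hp hbnd ?_
      · have hie : ¬ (ys.isEmpty = true) := by simp [List.isEmpty_iff, hne]
        rw [List.head_append, dif_neg hie]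
        exact hhead
      · intro y hy
        rcases List.mem_append.1 hy with h | h
        · exact hadj y h
        · rw [List.mem_singleton.1 h]; exact hGxz
      · refine List.IsChain.append hch (List.isChain_singleton z) ?_
        intro a ha y' hy'
        rw [List.getLast?_eq_getLast hne] at ha
        simp only [Option.mem_def, Option.some.injEq, List.head?_cons] at ha hy'
        rw [← ha, ← hy', ← hyt, hce]
        exact hbfree

lemma extend [Fintype V] {G : SimpleGraph V} {k : ℕ} (hdeg : DegBnd G k)
    {x y₀ : V} (hadj : G.Adj x y₀) {c : Sym2 V → ℕ}
    (hp : Proper (G.deleteEdges {s(x, y₀)}) c)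
    (hbnd : Bounded (G.deleteEdges {s(x, y₀)}) c k) :
    ∃ c', Proper G c' ∧ Bounded G c' k :=
  extend_aux hdeg x y₀ (Fintype.card V) [y₀] (by simp) c (by simp) (by simp)
    (List.nodup_singleton y₀) (by simpa using hadj) hp hbnd (List.isChain_singleton y₀)

lemma vizing [Fintype V] {k : ℕ} :
    ∀ (n : ℕ) (G : SimpleGraph V), G.edgeSet.ncard ≤ n → DegBnd G k →
    ∃ c, Proper G c ∧ Bounded G c k := by
  intro n
  induction n with
  | zero =>
    intro G hn hdeg
    have hE : G.edgeSet = ∅ := by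
      rw [← Set.ncard_eq_zero (Set.toFinite _)]; omega
    refine ⟨fun _ => 0, ?_, ?_⟩
    · intro e₁ he₁; rw [hE] at he₁; cases he₁
    · intro e he; rw [hE] at he; cases he
  | succ n ih =>
    intro G hn hdeg
    by_cases hE : G.edgeSet = ∅
    · refine ⟨fun _ => 0, ?_, ?_⟩
      · intro e₁ he₁; rw [hE] at he₁; cases he₁
      · intro e he; rw [hE] at he; cases he
    · obtain ⟨e, he⟩ := Set.nonempty_iff_ne_empty.2 hE
      revert he
      induction e using Sym2.ind with
      | _ x y =>
      intro he
      have hadj : G.Adj x y := G.mem_edgeSet.1 he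
      have hlt : (G.deleteEdges {s(x, y)}).edgeSet.ncard < G.edgeSet.ncard := by
        rw [edgeSet_deleteEdges]
        refine Set.ncard_lt_ncard ?_ (Set.toFinite _)
        refine Set.ssubset_iff_subset_ne.2 ⟨Set.diff_subset, fun hEq => ?_⟩
        have : s(x, y) ∈ G.edgeSet \ {s(x, y)} := hEq.symm ▸ he
        exact this.2 rfl
      have hdeg' : DegBnd (G.deleteEdges {s(x, y)}) k := fun v => by
        obtain ⟨t, h1, h2⟩ := hdeg v
        exact ⟨t, fun e' he' hv => h1 e' (edgeSet_mono (deleteEdges_le _) he') hv, h2⟩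
      obtain ⟨c, hpc, hbc⟩ := ih (G.deleteEdges {s(x, y)}) (by omega) hdeg'
      exact extend hdeg hadj hpc hbc

end VZ

theorem stmt0 {V : Type*} [Fintype V] (G : SimpleGraph V) [DecidableRel G.Adj]
    (hconn : G.Connected) (hnt : Nontrivial V) :
    1 ≤ pd G ∧ pd G ≤ rd G ∧ rd G ≤ chromIndex G ∧ chromIndex G ≤ G.maxDegree + 1 := by
  classical
  -- Vizing's theorem: a proper edge coloring with Δ+1 colors
  have hdeg : VZ.DegBnd G (G.maxDegree + 1) := by
    intro v
    refine ⟨G.incidenceFinset v, ?_, ?_⟩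
    · intro e he hv
      rw [mem_incidenceFinset]
      exact ⟨he, hv⟩
    · rw [card_incidenceFinset_eq_degree]
      exact Nat.lt_succ_of_le (G.degree_le_maxDegree v)
  obtain ⟨c₀, hp₀, hb₀⟩ := VZ.vizing (G.edgeSet.ncard) G le_rfl hdeg
  set Sχ : Set ℕ := {k | ∃ c : Sym2 V → ℕ, (∀ e ∈ G.edgeSet, c e < k) ∧
    ∀ e₁ ∈ G.edgeSet, ∀ e₂ ∈ G.edgeSet, EdgesAdj e₁ e₂ → c e₁ ≠ c e₂} with hSχ
  set Srd : Set ℕ := {k | ∃ c : Sym2 V → ℕ, (∀ e ∈ G.edgeSet, c e < k) ∧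
    ∀ x y : V, x ≠ y → ∃ F, IsRainbowSepCut G c F x y} with hSrd
  set Spd : Set ℕ := {k | ∃ c : Sym2 V → ℕ, (∀ e ∈ G.edgeSet, c e < k) ∧
    ∀ x y : V, x ≠ y → ∃ F, IsProperSepCut G c F x y} with hSpd
  have hχmem : (G.maxDegree + 1) ∈ Sχ := ⟨c₀, hb₀, hp₀⟩
  have hsub1 : Sχ ⊆ Srd := by
    intro k hk
    obtain ⟨c, hck, hcp⟩ := hk
    refine ⟨c, hck, fun x y hxy => ?_⟩
    refine ⟨{e | e ∈ G.edgeSet ∧ x ∈ e}, ⟨fun e he => he.1, ?_⟩, ?_⟩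
    · rintro ⟨wk⟩
      cases wk with
      | nil => exact hxy rfl
      | cons h p =>
        have h' := deleteEdges_adj.1 h
        exact h'.2 ⟨(G.mem_edgeSet).2 h'.1, by simp⟩
    · intro e₁ h1 e₂ h2 hceq
      by_contra hne
      exact hcp e₁ h1.1 e₂ h2.1 ⟨hne, x, h1.2, h2.2⟩ hceq
  have hsub2 : Srd ⊆ Spd := by
    intro k hk
    obtain ⟨c, hck, hsep⟩ := hk
    refine ⟨c, hck, fun x y hxy => ?_⟩
    obtain ⟨F, hFsep, hFinj⟩ := hsep x y hxy
    exact ⟨F, hFsep, fun e₁ h1 e₂ h2 hadj hceq => hadj.1 (hFinj h1 h2 hceq)⟩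
  have hχne : Sχ.Nonempty := ⟨_, hχmem⟩
  have hrdne : Srd.Nonempty := ⟨_, hsub1 hχmem⟩
  have hpdne : Spd.Nonempty := ⟨_, hsub2 (hsub1 hχmem)⟩
  have hc1 : chromIndex G ≤ G.maxDegree + 1 := Nat.sInf_le hχmem
  have hc2 : rd G ≤ chromIndex G := Nat.sInf_le (hsub1 (Nat.sInf_mem hχne))
  have hc3 : pd G ≤ rd G := Nat.sInf_le (hsub2 (Nat.sInf_mem hrdne))
  have hc4 : 1 ≤ pd G := by
    rw [Nat.one_le_iff_ne_zero]
    intro h0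
    rcases Nat.sInf_eq_zero.1 h0 with h | h
    · obtain ⟨c, hck, -⟩ := h
      obtain ⟨x, y, hxy⟩ := hnt
      obtain ⟨wk⟩ := hconn.preconnected x y
      cases wk with
      | nil => exact hxy rfl
      | cons h p => exact absurd (hck _ ((G.mem_edgeSet).2 h)) (by omega)
    · rw [hSpd] at hpdne
      exact Set.not_nonempty_empty (h ▸ hpdne)
  exact ⟨hc4, hc3, hc2, hc1⟩
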